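/- Let L ≥ 2 be an integer, A ∈ ℝ^{M×N}, and b ∈ ℝ^M not identically zero, with S₊ = {z ≥ 0 : Az = b} nonempty. Suppose (r,u) follows the weight-normalized gradient flow with time-dependent learning rates (η_r, η_u) = (r(t)², 1), with r(0) > 0, u(0) > 0 entrywise, and ‖u(0)‖₂ = 1, and set x(t) = (r(t)/‖u(t)‖₂) u(t). Then lim_{t→∞} 𝓛(x(t)) = 0. -/

import Mathlib

open Filter Topology

noncomputable section

variable {M N : ℕ}

/-- Entrywise (Hadamard) natural power `x^{⊙L}`. -/
def hadPow (x : Fin N → ℝ) (L : ℕ) : Fin N → ℝ := fun n => x n ^ L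

/-- Euclidean (ℓ2) norm of a vector. -/
def eucNorm (u : Fin N → ℝ) : ℝ := Real.sqrt (∑ n, u n ^ 2)

/-- The loss `𝓛(x) = (1/(2L)) ‖A x^{⊙L} − b‖₂²`. -/
def loss (A : Matrix (Fin M) (Fin N) ℝ) (b : Fin M → ℝ) (L : ℕ) (x : Fin N → ℝ) : ℝ :=
  (1 / (2 * (L : ℝ))) * ∑ m, (A.mulVec (hadPow x L) m - b m) ^ 2

/-- The gradient `∇𝓛(x) = [Aᵀ(A x^{⊙L} − b)] ⊙ x^{⊙(L−1)}`. -/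
def gradLoss (A : Matrix (Fin M) (Fin N) ℝ) (b : Fin M → ℝ) (L : ℕ) (x : Fin N → ℝ) :
    Fin N → ℝ :=
  fun n => A.transpose.mulVec (A.mulVec (hadPow x L) - b) n * x n ^ (L - 1)

/-- The weight-normalized vector `x = (r/‖u‖₂) u`. -/
def normVec (r : ℝ) (u : Fin N → ℝ) : Fin N → ℝ := (r / eucNorm u) • u

/-- `∇_r 𝓛̃(r,u) = (uᵀ/‖u‖₂) ∇𝓛((r/‖u‖₂)u)`. -/
def gradR (A : Matrix (Fin M) (Fin N) ℝ) (b : Fin M → ℝ) (L : ℕ) (r : ℝ)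
    (u : Fin N → ℝ) : ℝ :=
  ∑ n, (u n / eucNorm u) * gradLoss A b L (normVec r u) n

/-- `∇_u 𝓛̃(r,u) = (r/‖u‖₂)(I − uuᵀ/‖u‖₂²) ∇𝓛((r/‖u‖₂)u)`. -/
def gradU (A : Matrix (Fin M) (Fin N) ℝ) (b : Fin M → ℝ) (L : ℕ) (r : ℝ)
    (u : Fin N → ℝ) : Fin N → ℝ :=
  fun n => (r / eucNorm u) * (gradLoss A b L (normVec r u) n -
    (∑ k, u k * gradLoss A b L (normVec r u) k) / eucNorm u ^ 2 * u n)

/-- Weight-normalized gradient flow with (possibly time-dependent) learning rates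
`(η_r, η_u)`: `∂ₜ r = −η_r ∇_r 𝓛̃(r,u)`, `∂ₜ u = −η_u ∇_u 𝓛̃(r,u)` for `t ≥ 0`. -/
def WNFlow (A : Matrix (Fin M) (Fin N) ℝ) (b : Fin M → ℝ) (L : ℕ)
    (ηr ηu : ℝ → ℝ) (r : ℝ → ℝ) (u : ℝ → Fin N → ℝ) : Prop :=
  (∀ t, 0 ≤ t → HasDerivAt r (-(ηr t * gradR A b L (r t) (u t))) t) ∧
  (∀ t, 0 ≤ t → ∀ n, HasDerivAt (fun s => u s n) (-(ηu t * gradU A b L (r t) (u t) n)) t)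

/-- Plain gradient flow `∂ₜ x = −∇𝓛(x)` for `t ≥ 0`. -/
def GradFlow (A : Matrix (Fin M) (Fin N) ℝ) (b : Fin M → ℝ) (L : ℕ)
    (x : ℝ → Fin N → ℝ) : Prop :=
  ∀ t, 0 ≤ t → ∀ n, HasDerivAt (fun s => x s n) (-gradLoss A b L (x t) n) t

/-- The set of nonnegative solutions `S₊ = {z ≥ 0 : Az = b}`. -/
def Splus (A : Matrix (Fin M) (Fin N) ℝ) (b : Fin M → ℝ) : Set (Fin N → ℝ) :=
  {z | (∀ n, 0 ≤ z n) ∧ A.mulVec z = b}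

/-- Weighted ℓ1-norm `‖z‖_{w,1} = ‖w ⊙ z‖₁`. -/
def wl1 (w z : Fin N → ℝ) : ℝ := ∑ n, |w n * z n|

/-- The Moore–Penrose conditions characterizing the pseudoinverse `A†`. -/
def IsMoorePenrose (A : Matrix (Fin M) (Fin N) ℝ) (Adag : Matrix (Fin N) (Fin M) ℝ) :
    Prop :=
  A * Adag * A = A ∧ Adag * A * Adag = Adag ∧
    (A * Adag).transpose = A * Adag ∧ (Adag * A).transpose = Adag * A

/-- The potential `F` defining the Bregman divergence. -/
def breF (L : ℕ) (p : Fin N → ℝ) : ℝ :=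
  if L = 2 then (1 / 2) * ∑ n, (p n * Real.log (p n) - p n)
  else ((L : ℝ) / (2 * (2 - (L : ℝ)))) * ∑ n, p n ^ ((2 : ℝ) / (L : ℝ))

/-- The gradient of the potential `F`. -/
def breGradF (L : ℕ) (q : Fin N → ℝ) : Fin N → ℝ :=
  fun n => if L = 2 then (1 / 2) * Real.log (q n)
  else (1 / (2 - (L : ℝ))) * q n ^ ((2 : ℝ) / (L : ℝ) - 1)

/-- Bregman divergence `D_F(p,q) = F(p) − F(q) − ⟨∇F(q), p − q⟩`. -/
def bregman (L : ℕ) (p q : Fin N → ℝ) : ℝ :=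
  breF L p - breF L q - ∑ n, breGradF L q n * (p n - q n)


/-! Auxiliary calculus lemmas -/

lemma aux_mono {f f' : ℝ → ℝ} (hd : ∀ t ∈ Set.Ici (0:ℝ), HasDerivAt f (f' t) t)
    (h0 : ∀ t ∈ Set.Ici (0:ℝ), 0 ≤ f' t) : MonotoneOn f (Set.Ici 0) := by
  apply monotoneOn_of_deriv_nonneg (convex_Ici 0)
  · exact fun t ht => (hd t ht).continuousAt.continuousWithinAt
  · intro t ht
    rw [interior_Ici] at ht
    exact ((hd t (Set.mem_Ici.mpr (le_of_lt ht))).differentiableAt).differentiableWithinAt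
  · intro t ht
    rw [interior_Ici] at ht
    rw [(hd t (Set.mem_Ici.mpr (le_of_lt ht))).deriv]
    exact h0 t (Set.mem_Ici.mpr (le_of_lt ht))

lemma aux_const {f : ℝ → ℝ} (hd : ∀ t ∈ Set.Ici (0:ℝ), HasDerivAt f 0 t) :
    ∀ t ∈ Set.Ici (0:ℝ), f t = f 0 := by
  intro t ht
  have h1 := aux_mono hd (fun t _ => le_refl 0) (Set.self_mem_Ici) ht ht
  have h2 := aux_mono (f := fun s => -f s) (f' := fun _ => 0)
    (fun t ht => by simpa using (hd t ht).fun_neg) (fun t _ => le_refl 0)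
    (Set.self_mem_Ici) ht ht
  simp at h2
  linarith

lemma aux_trunc_cont {f : ℝ → ℝ} (h : ∀ t ∈ Set.Ici (0:ℝ), ContinuousAt f t) :
    Continuous (fun s => f (max s 0)) := by
  rw [continuous_iff_continuousAt]
  intro t
  rcases lt_or_ge t 0 with ht | ht
  · have : (fun s => f (max s 0)) =ᶠ[𝓝 t] (fun _ => f 0) := by
      filter_upwards [Iio_mem_nhds ht] with s hs
      rw [max_eq_right (le_of_lt hs)]
    exact ContinuousAt.congr (continuousAt_const) this.symm
  · have hmax : ContinuousAt (fun s : ℝ => max s 0) t := by fun_prop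
    have hmx : max t 0 = t := max_eq_left ht
    exact ContinuousAt.comp (by rw [hmx]; exact h t ht) hmax

lemma aux_ftc {f : ℝ → ℝ} (hf : Continuous f) (t : ℝ) :
    HasDerivAt (fun s => ∫ x in (0:ℝ)..s, f x) (f t) t :=
  intervalIntegral.integral_hasDerivAt_right (hf.intervalIntegrable _ _)
    (hf.stronglyMeasurableAtFilter _ _) hf.continuousAt

lemma aux_pos {f c : ℝ → ℝ} (hd : ∀ t ∈ Set.Ici (0:ℝ), HasDerivAt f (c t * f t) t)
    (hc : ∀ t ∈ Set.Ici (0:ℝ), ContinuousAt c t) (h0 : 0 < f 0) :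
    ∀ t ∈ Set.Ici (0:ℝ), 0 < f t := by
  set ch : ℝ → ℝ := fun s => c (max s 0) with hch
  have hchc : Continuous ch := aux_trunc_cont hc
  set I : ℝ → ℝ := fun s => ∫ x in (0:ℝ)..s, ch x with hI
  have hId : ∀ s, HasDerivAt I (ch s) s := aux_ftc hchc
  have key : ∀ t ∈ Set.Ici (0:ℝ), f t * Real.exp (-I t) = f 0 := by
    have hgd : ∀ t ∈ Set.Ici (0:ℝ),
        HasDerivAt (fun s => f s * Real.exp (-I s)) 0 t := by
      intro t ht
      have h1 : HasDerivAt (fun s => Real.exp (-I s)) (-(ch t) * Real.exp (-I t)) t := by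
        have := ((hId t).fun_neg).exp
        convert this using 1
        ring
      have := (hd t ht).fun_mul h1
      convert this using 1
      rfl
      rfl
      have hcht : ch t = c t := by rw [hch]; simp [max_eq_left (Set.mem_Ici.mp ht)]
      rw [hcht]; ring
    intro t ht
    have := aux_const hgd t ht
    simpa [hI, intervalIntegral.integral_same] using this
  intro t ht
  have h := key t ht
  have he : 0 < Real.exp (-I t) := Real.exp_pos _
  nlinarith [key 0 Set.self_mem_Ici, h]

lemma aux_breg2 {z w : ℝ} (hz : 0 ≤ z) (hw : 0 < w) :
    w * Real.log w - w + Real.log w * (z - w) ≤ z * Real.log z - z := by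
  rcases eq_or_lt_of_le hz with hz0 | hzpos
  · rw [← hz0]; simp; nlinarith [hw]
  · have h := Real.log_le_sub_one_of_pos (show 0 < w / z from div_pos hw hzpos)
    have hlog : Real.log (w / z) = Real.log w - Real.log z :=
      Real.log_div (ne_of_gt hw) (ne_of_gt hzpos)
    rw [hlog] at h
    have := mul_le_mul_of_nonneg_left h (le_of_lt hzpos)
    have hzz : z * (w / z - 1) = w - z := by field_simp
    nlinarith [this]

lemma aux_breg3 {L : ℕ} (hL3 : 3 ≤ L) {z a : ℝ} (hz : 0 ≤ z) (ha : 0 < a) :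
    0 ≤ -((L:ℝ)^2/(2*((L:ℝ)-2))) * z ^ ((2:ℝ)/(L:ℝ))
      + ((L:ℝ)^2/(2*((L:ℝ)-2))) * a^2 + ((L:ℝ)/((L:ℝ)-2)) * (a^(L-2))⁻¹ * (z - a^L) := by
  set lr : ℝ := (L:ℝ) with hlr
  have hlr3 : (3:ℝ) ≤ lr := by simp only [hlr]; exact_mod_cast hL3
  have hlr0 : (0:ℝ) < lr := by linarith
  have hlr2 : (0:ℝ) < lr - 2 := by linarith
  set p : ℝ := 2 / lr with hp
  have hp0 : 0 < p := by positivity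
  have hp1 : p < 1 := by rw [hp]; rw [div_lt_one hlr0]; linarith
  have haL : (0:ℝ) < a ^ L := pow_pos ha L
  have hwp : (a ^ L : ℝ) ^ (p : ℝ) = a ^ 2 := by
    rw [← Real.rpow_natCast a L, ← Real.rpow_natCast a 2, ← Real.rpow_mul (le_of_lt ha)]
    congr 1
    rw [hp]; field_simp; simp [hlr]
  have hwp1 : (a ^ L : ℝ) ^ (p - 1 : ℝ) = (a ^ (L - 2))⁻¹ := by
    rw [← Real.rpow_natCast a L, ← Real.rpow_mul (le_of_lt ha)]
    rw [← Real.rpow_natCast a (L - 2), ← Real.rpow_neg (le_of_lt ha)]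
    congr 1
    have hc : ((L - 2 : ℕ) : ℝ) = lr - 2 := by
      push_cast [Nat.cast_sub (by omega : 2 ≤ L)]; ring
    rw [hc, hp]; field_simp; rw [hlr]; ring
  have key : z ^ (p : ℝ) ≤ (1 - p) * a ^ 2 + p * (a ^ (L - 2))⁻¹ * z := by
    have amgm := Real.geom_mean_le_arith_mean2_weighted (le_of_lt hp0)
      (by linarith : (0:ℝ) ≤ 1 - p) hz (le_of_lt haL) (by ring)
    have hmul := mul_le_mul_of_nonneg_right amgm
      (le_of_lt (Real.rpow_pos_of_pos haL (p - 1)))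
    have hL1 : z ^ (p:ℝ) * (a ^ L) ^ (1 - p : ℝ) * (a ^ L) ^ (p - 1 : ℝ) = z ^ (p:ℝ) := by
      rw [mul_assoc, ← Real.rpow_add haL]
      norm_num
    have hR1 : (p * z + (1 - p) * a ^ L) * (a ^ L) ^ (p - 1 : ℝ)
        = p * (a ^ (L-2))⁻¹ * z + (1 - p) * a ^ 2 := by
      rw [add_mul]
      congr 1
      · rw [hwp1]; ring
      · rw [mul_assoc]
        congr 1
        nth_rewrite 1 [← Real.rpow_one (a ^ L)]
        rw [← Real.rpow_add haL, show (1:ℝ) + (p - 1) = p by ring, hwp]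
    rw [hL1, hR1] at hmul
    linarith
  have haLQ : (a ^ (L - 2))⁻¹ * a ^ L = a ^ 2 := by
    have h1 : a ^ L = a ^ (L - 2) * a ^ 2 := by
      rw [← pow_add]; congr 1; omega
    rw [h1]
    field_simp
  have hκ : (0:ℝ) < lr ^ 2 / (2 * (lr - 2)) := by positivity
  have hmul2 := mul_le_mul_of_nonneg_left key (le_of_lt hκ)
  have expand : lr ^ 2 / (2 * (lr - 2)) * ((1 - p) * a ^ 2 + p * (a ^ (L - 2))⁻¹ * z)
      = lr ^ 2 / (2 * (lr - 2)) * a ^ 2 + lr / (lr - 2) * (a ^ (L - 2))⁻¹ * z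
        - lr / (lr - 2) * a ^ 2 := by
    rw [hp]; field_simp; ring
  rw [expand] at hmul2
  have hfin : lr / (lr - 2) * (a ^ (L - 2))⁻¹ * (z - a ^ L)
      = lr / (lr - 2) * (a ^ (L - 2))⁻¹ * z - lr / (lr - 2) * a ^ 2 := by
    rw [mul_sub]
    congr 1
    rw [mul_assoc, haLQ]
  rw [hfin]
  linarith

/-- The final contradiction scheme. -/
lemma aux_final {ρ D m r2 D' m' : ℝ → ℝ} {c δ Cv : ℝ}
    (hδ : 0 < δ) (hc : 0 < c) (hCv : 0 ≤ Cv)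
    (hρd : ∀ t ∈ Set.Ici (0:ℝ), HasDerivAt ρ (r2 t) t) (hρ0 : ρ 0 = 0)
    (hDd : ∀ t ∈ Set.Ici (0:ℝ), HasDerivAt D (D' t) t)
    (hD'le : ∀ t ∈ Set.Ici (0:ℝ), D' t ≤ -(δ * r2 t))
    (hDpos : ∀ t ∈ Set.Ici (0:ℝ), 0 ≤ D t)
    (hmd : ∀ t ∈ Set.Ici (0:ℝ), HasDerivAt m (m' t) t)
    (hm'le : ∀ t ∈ Set.Ici (0:ℝ), |m' t| ≤ Cv * r2 t)
    (hbound : ∀ t ∈ Set.Ici (0:ℝ), m 0 - Cv * (D 0 / δ) ≤ m t → c ≤ r2 t) :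
    False := by
  have hK : ∀ t ∈ Set.Ici (0:ℝ), ρ t ≤ D 0 / δ := by
    intro t ht
    have hmono := aux_mono (f := fun s => -(D s) - δ * ρ s)
      (f' := fun s => -(D' s) - δ * r2 s)
      (fun s hs => ((hDd s hs).neg.sub ((hρd s hs).const_mul δ)))
      (fun s hs => by have := hD'le s hs; show 0 ≤ -D' s - δ * r2 s; linarith)
    have h := hmono Set.self_mem_Ici ht ht
    simp only at h
    rw [hρ0] at h
    have hDt := hDpos t ht
    rw [le_div_iff₀ hδ]
    nlinarith
  have hm : ∀ t ∈ Set.Ici (0:ℝ), m 0 - Cv * (D 0 / δ) ≤ m t := by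
    intro t ht
    have hmono := aux_mono (f := fun s => m s + Cv * ρ s)
      (f' := fun s => m' s + Cv * r2 s)
      (fun s hs => (hmd s hs).add ((hρd s hs).const_mul Cv))
      (fun s hs => by have := abs_le.mp (hm'le s hs); show 0 ≤ m' s + Cv * r2 s; linarith [this.1])
    have h := hmono Set.self_mem_Ici ht ht
    simp only at h
    rw [hρ0] at h
    have hρK := hK t ht
    have h2 : Cv * ρ t ≤ Cv * (D 0 / δ) := mul_le_mul_of_nonneg_left hρK hCv
    linarith
  have hlin : ∀ t ∈ Set.Ici (0:ℝ), c * t ≤ ρ t := by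
    intro t ht
    have hmono := aux_mono (f := fun s => ρ s - c * s)
      (f' := fun s => r2 s - c)
      (fun s hs => by
        have := (hρd s hs).fun_sub ((hasDerivAt_id s).const_mul c)
        convert this using 1
        rfl
        rfl
        rfl
        ring)
      (fun s hs => by
        have h1 := hbound s hs (hm s hs)
        show 0 ≤ r2 s - c
        linarith)
    have h := hmono Set.self_mem_Ici ht ht
    simp only at h
    rw [hρ0] at h
    simp at h
    linarith
  have hKnn : 0 ≤ D 0 / δ := by
    have := hK 0 Set.self_mem_Ici
    rw [hρ0] at this
    linarith
  set T : ℝ := (D 0 / δ + 1) / c with hT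
  have hT0 : (0:ℝ) ≤ T := by positivity
  have h1 := hlin T hT0
  have h2 := hK T hT0
  have h3 : c * T = D 0 / δ + 1 := by
    rw [hT]
    field_simp
  linarith


set_option maxHeartbeats 2000000 in
theorem stmt19 {M N : ℕ} (L : ℕ) (hL : 2 ≤ L)
    (A : Matrix (Fin M) (Fin N) ℝ) (b : Fin M → ℝ) (hb : b ≠ 0)
    (hS : (Splus A b).Nonempty)
    (r : ℝ → ℝ) (u : ℝ → Fin N → ℝ)
    (hflow : WNFlow A b L (fun t => r t ^ 2) (fun _ => 1) r u)
    (hr0 : 0 < r 0) (hu0 : ∀ n, 0 < u 0 n) (hnorm : eucNorm (u 0) = 1) :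
    Tendsto (fun t => loss A b L (normVec (r t) (u t))) atTop (𝓝 0) := by
  obtain ⟨z, hz0, hAz⟩ := hS
  have hLr : (2:ℝ) ≤ (L:ℝ) := by exact_mod_cast hL
  have hLne : (L:ℝ) ≠ 0 := by linarith
  set x : ℝ → Fin N → ℝ := fun t n => r t * u t n with hxdef
  set res : ℝ → Fin M → ℝ := fun t m => (∑ j, A m j * x t j ^ L) - b m with hresdef
  set v : ℝ → Fin N → ℝ := fun t n => ∑ m, A m n * res t m with hvdef
  -- step 1 : the norm of u stays equal to 1
  have hsum1 : ∀ t ∈ Set.Ici (0:ℝ), ∑ n, u t n ^ 2 = 1 := by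
    have hφd : ∀ t ∈ Set.Ici (0:ℝ), HasDerivAt (fun s => ∑ n, u s n ^ 2) 0 t := by
      intro t ht
      have hd : HasDerivAt (fun s => ∑ n, u s n ^ 2)
          (∑ n, 2 * u t n * (-((1:ℝ) * gradU A b L (r t) (u t) n))) t := by
        apply HasDerivAt.fun_sum
        intro n _
        have h1 := (hflow.2 t ht n).fun_pow 2
        convert h1 using 1
        rfl
        norm_num
      convert hd using 1
      symm
      rcases eq_or_ne (eucNorm (u t)) 0 with he | he
      · refine Finset.sum_eq_zero fun n _ => ?_
        simp [gradU, he]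
      · have he2 : eucNorm (u t) ^ 2 = ∑ n, u t n ^ 2 :=
          Real.sq_sqrt (Finset.sum_nonneg fun n _ => sq_nonneg _)
        simp only [gradU, one_mul]
        set e := eucNorm (u t) with hedef
        set G := gradLoss A b L (normVec (r t) (u t)) with hGdef
        set S := ∑ k, u t k * G k with hSdef
        have hterm : ∀ n, 2 * u t n * -(r t / e * (G n - S / e ^ 2 * u t n))
            = -(2 * (r t / e)) * (u t n * G n)
              + (2 * (r t / e)) * (S / e ^ 2) * u t n ^ 2 := by
          intro n; ring
        rw [Finset.sum_congr rfl fun n _ => hterm n, Finset.sum_add_distrib,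
          ← Finset.mul_sum, ← Finset.mul_sum, ← hSdef, ← he2]
        field_simp
        ring
    intro t ht
    rw [aux_const hφd t ht]
    have hnn : (0:ℝ) ≤ ∑ n, u 0 n ^ 2 := Finset.sum_nonneg fun n _ => sq_nonneg _
    have hs := Real.sq_sqrt hnn
    rw [eucNorm] at hnorm
    rw [← hs, hnorm]
    norm_num
  have henorm : ∀ t ∈ Set.Ici (0:ℝ), eucNorm (u t) = 1 := by
    intro t ht
    rw [eucNorm, hsum1 t ht, Real.sqrt_one]
  have hxeq : ∀ t ∈ Set.Ici (0:ℝ), normVec (r t) (u t) = x t := by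
    intro t ht
    funext n
    rw [normVec, henorm t ht]
    simp [hxdef]
  have hgrad : ∀ t n, gradLoss A b L (x t) n = v t n * x t n ^ (L - 1) := by
    intro t n
    have h1 : A.transpose.mulVec (A.mulVec (hadPow (x t) L) - b) n = v t n := by
      simp [Matrix.mulVec, dotProduct, Matrix.transpose, hvdef, hresdef, hadPow,
        Pi.sub_apply]
    rw [gradLoss, h1]
  -- step 2 : x satisfies the rescaled gradient flow
  have hx' : ∀ t ∈ Set.Ici (0:ℝ), ∀ n,
      HasDerivAt (fun s => x s n) (-(r t ^ 2 * (v t n * x t n ^ (L-1)))) t := by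
    intro t ht n
    have hd := (hflow.1 t ht).fun_mul (hflow.2 t ht n)
    have he := henorm t ht
    have hG : ∀ k, gradLoss A b L (normVec (r t) (u t)) k = v t k * x t k ^ (L-1) := by
      intro k; rw [hxeq t ht, hgrad]
    have hgr : gradR A b L (r t) (u t) = ∑ k, u t k * (v t k * x t k ^ (L-1)) := by
      rw [gradR]
      refine Finset.sum_congr rfl fun k _ => ?_
      rw [he, hG k]
      ring
    have hgu : gradU A b L (r t) (u t) n
        = r t * ((v t n * x t n ^ (L-1))
            - (∑ k, u t k * (v t k * x t k ^ (L-1))) * u t n) := by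
      simp only [gradU, he, hG n]
      rw [Finset.sum_congr rfl fun k (_ : k ∈ Finset.univ) => by rw [hG k]]
      norm_num
    convert hd using 1
    rfl
    rfl
    rw [hgr, hgu]
    simp only
    ring
  -- step 3 : positivity of x
  have hvd : ∀ t ∈ Set.Ici (0:ℝ), ∀ n, HasDerivAt (fun s => v s n)
      (∑ m, A m n * (∑ j, A m j * ((L:ℝ) * x t j ^ (L-1)
        * (-(r t ^ 2 * (v t j * x t j ^ (L-1))))))) t := by
    intro t ht n
    apply HasDerivAt.fun_sum
    intro m _
    exact ((HasDerivAt.fun_sum fun j (_ : j ∈ Finset.univ) =>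
      ((hx' t ht j).fun_pow L).const_mul (A m j)).sub_const (b m)).const_mul (A m n)
  have hxpos : ∀ t ∈ Set.Ici (0:ℝ), ∀ n, 0 < x t n := by
    intro t ht n
    refine aux_pos (f := fun s => x s n)
      (c := fun s => -(r s ^ 2 * v s n * x s n ^ (L-2))) ?_ ?_ ?_ t ht
    · intro s hs
      have h1 := hx' s hs n
      convert h1 using 1
      show -(r s ^ 2 * v s n * x s n ^ (L-2)) * x s n = _
      have hpow : x s n ^ (L-1) = x s n ^ (L-2) * x s n := by
        rw [← pow_succ]
        congr 1
        omega
      rw [hpow]; ring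
    · intro s hs
      have hrc : ContinuousAt r s := (hflow.1 s hs).continuousAt
      have hxc : ContinuousAt (fun w => x w n) s := (hx' s hs n).continuousAt
      have hvc := (hvd s hs n).continuousAt
      exact (((hrc.pow 2).mul hvc).mul (hxc.pow (L-2))).neg
    · exact mul_pos hr0 (hu0 n)
  -- step 4 : loss derivative and monotonicity
  have hlossfun : (fun s => loss A b L (x s))
      = fun s => (1/(2*(L:ℝ))) * ∑ m, ((∑ j, A m j * x s j ^ L) - b m)^2 := rfl
  have hlossd : ∀ t ∈ Set.Ici (0:ℝ), HasDerivAt (fun s => loss A b L (x s))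
      (-(r t ^ 2 * ∑ n, (v t n * x t n ^ (L-1))^2)) t := by
    intro t ht
    have hterm : ∀ (m : Fin M), HasDerivAt (fun s => ((∑ j, A m j * x s j ^ L) - b m)^2)
        ((2:ℝ) * ((∑ j, A m j * x t j ^ L) - b m) ^ 1 *
          (∑ j, A m j * ((L:ℝ) * x t j ^ (L-1) * (-(r t ^ 2 * (v t j * x t j ^ (L-1))))))) t := by
      intro m
      exact ((HasDerivAt.fun_sum fun j (_ : j ∈ Finset.univ) =>
        ((hx' t ht j).fun_pow L).const_mul (A m j)).sub_const (b m)).pow 2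
    have hsumd := (HasDerivAt.fun_sum fun m (_ : m ∈ Finset.univ) => hterm m).const_mul
      (1/(2*(L:ℝ)))
    rw [hlossfun]
    convert hsumd using 1
    rfl
    rfl
    have h1 : ∀ (m : Fin M), (2:ℝ) * ((∑ j, A m j * x t j ^ L) - b m) ^ 1 *
        (∑ j, A m j * ((L:ℝ) * x t j ^ (L-1) * (-(r t ^ 2 * (v t j * x t j ^ (L-1))))))
        = ∑ j, A m j * res t m * ((2:ℝ)*(L:ℝ))
            * (x t j ^ (L-1) * (-(r t ^ 2 * (v t j * x t j ^ (L-1))))) := by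
      intro m
      rw [Finset.mul_sum]
      refine Finset.sum_congr rfl fun j _ => ?_
      rw [hresdef]
      ring
    rw [Finset.sum_congr rfl fun m _ => h1 m, Finset.sum_comm]
    have h2 : ∀ (j : Fin N), ∑ m, A m j * res t m * ((2:ℝ)*(L:ℝ))
          * (x t j ^ (L-1) * (-(r t ^ 2 * (v t j * x t j ^ (L-1)))))
        = v t j * (((2:ℝ)*(L:ℝ)) * (x t j ^ (L-1) * (-(r t ^ 2 * (v t j * x t j ^ (L-1)))))) := by
      intro j
      calc (∑ m, A m j * res t m * ((2:ℝ)*(L:ℝ))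
              * (x t j ^ (L-1) * (-(r t ^ 2 * (v t j * x t j ^ (L-1))))))
          = ∑ m, (A m j * res t m) * (((2:ℝ)*(L:ℝ))
              * (x t j ^ (L-1) * (-(r t ^ 2 * (v t j * x t j ^ (L-1)))))) :=
            Finset.sum_congr rfl fun m _ => by ring
        _ = (∑ m, A m j * res t m) * (((2:ℝ)*(L:ℝ))
              * (x t j ^ (L-1) * (-(r t ^ 2 * (v t j * x t j ^ (L-1)))))) :=
            (Finset.sum_mul _ _ _).symm
    rw [Finset.sum_congr rfl fun j _ => h2 j]
    rw [show -(r t ^ 2 * ∑ n, (v t n * x t n ^ (L-1))^2)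
        = ∑ n, -(r t ^ 2 * (v t n * x t n ^ (L-1))^2) from by
      rw [Finset.mul_sum, ← Finset.sum_neg_distrib]]
    rw [Finset.mul_sum]
    refine Finset.sum_congr rfl fun j _ => ?_
    field_simp
  have hLnonneg : ∀ t, 0 ≤ loss A b L (x t) := by
    intro t
    rw [loss]
    have h1 : (0:ℝ) ≤ ∑ m, (A.mulVec (hadPow (x t) L) m - b m) ^ 2 :=
      Finset.sum_nonneg fun m _ => sq_nonneg _
    positivity
  have hLanti : ∀ a ∈ Set.Ici (0:ℝ), ∀ c, a ≤ c → loss A b L (x c) ≤ loss A b L (x a) := by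
    intro a ha c hac
    have hmono := aux_mono (f := fun s => -loss A b L (x s))
      (f' := fun s => r s ^ 2 * ∑ n, (v s n * x s n ^ (L-1))^2)
      (fun s hs => by
        have := (hlossd s hs).fun_neg
        convert this using 1
        rfl
        rfl
        ring)
      (fun s hs => by
        have h1 : (0:ℝ) ≤ ∑ n, (v s n * x s n ^ (L-1))^2 :=
          Finset.sum_nonneg fun n _ => sq_nonneg _
        positivity)
    have h := hmono ha (le_trans ha hac) hac
    simpa using h
  have hressq : ∀ t, ∑ m, res t m ^ 2 = 2 * L * loss A b L (x t) := by
    intro t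
    rw [loss]
    rw [← mul_assoc, mul_one_div, div_self (by positivity : (2:ℝ) * L ≠ 0), one_mul]
    refine Finset.sum_congr rfl fun m _ => ?_
    simp [hresdef, Matrix.mulVec, dotProduct, hadPow]
  have hkey : ∀ t, ∑ n, v t n * (z n - x t n ^ L) = -∑ m, res t m ^ 2 := by
    intro t
    have h1 : ∀ (n : Fin N), v t n * (z n - x t n ^ L)
        = ∑ m, A m n * res t m * (z n - x t n ^ L) := by
      intro n
      rw [hvdef]
      simp only
      rw [Finset.sum_mul]
    rw [Finset.sum_congr rfl fun n _ => h1 n, Finset.sum_comm]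
    have h2 : ∀ (m : Fin M), ∑ n, A m n * res t m * (z n - x t n ^ L)
        = res t m * (∑ n, A m n * z n) - res t m * (∑ n, A m n * x t n ^ L) := by
      intro m
      have hpt : ∀ (n : Fin N), A m n * res t m * (z n - x t n ^ L)
          = res t m * (A m n * z n) - res t m * (A m n * x t n ^ L) := fun n => by ring
      rw [Finset.sum_congr rfl fun n _ => hpt n, Finset.sum_sub_distrib,
        ← Finset.mul_sum, ← Finset.mul_sum]
    rw [Finset.sum_congr rfl fun m _ => h2 m]
    have h3 : ∀ m, ∑ n, A m n * z n = b m := by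
      intro m
      have := congrFun hAz m
      simpa [Matrix.mulVec, dotProduct] using this
    have h4 : ∀ m, ∑ n, A m n * x t n ^ L = res t m + b m := by
      intro m
      rw [hresdef]
      ring
    rw [← Finset.sum_neg_distrib]
    refine Finset.sum_congr rfl fun m _ => ?_
    rw [h3 m, h4 m]
    ring
  -- sum of squares identity for r
  have hr2sum : ∀ t ∈ Set.Ici (0:ℝ), r t ^ 2 = ∑ n, x t n ^ 2 := by
    intro t ht
    simp only [hxdef, mul_pow, ← Finset.mul_sum, hsum1 t ht, mul_one]
  -- step 5 : the main estimate
  have hmain : ∀ ε, 0 < ε → ∃ T ∈ Set.Ici (0:ℝ), loss A b L (x T) < ε := by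
    intro ε hε
    by_contra hcon
    push_neg at hcon
    have hN : 0 < N := by
      rcases Nat.eq_zero_or_pos N with h0 | h
      · exfalso
        apply hb
        funext m
        have hm := congrFun hAz m
        rw [← hm]
        subst h0
        simp [Matrix.mulVec, dotProduct]
      · exact h
    set n₀ : Fin N := ⟨0, hN⟩ with hn₀
    set R0 : ℝ := Real.sqrt (2 * L * loss A b L (x 0)) with hR0
    have hres_bd : ∀ t ∈ Set.Ici (0:ℝ), ∀ m, |res t m| ≤ R0 := by
      intro t ht m
      have h1 : res t m ^ 2 ≤ ∑ m', res t m' ^ 2 :=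
        Finset.single_le_sum (f := fun m' => res t m' ^ 2)
          (fun i _ => sq_nonneg _) (Finset.mem_univ m)
      have h2 : ∑ m', res t m' ^ 2 ≤ 2 * L * loss A b L (x 0) := by
        rw [hressq t]
        have h3 := hLanti 0 Set.self_mem_Ici t (Set.mem_Ici.mp ht)
        nlinarith
      rw [← Real.sqrt_sq_eq_abs, hR0]
      exact Real.sqrt_le_sqrt (le_trans h1 h2)
    have hR0nn : 0 ≤ R0 := Real.sqrt_nonneg _
    set C : ℝ := (∑ m, |A m n₀|) * R0 + 1 with hC
    have hC0 : 0 < C := by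
      have h1 : (0:ℝ) ≤ ∑ m, |A m n₀| := Finset.sum_nonneg fun m _ => abs_nonneg _
      nlinarith
    have hvC : ∀ t ∈ Set.Ici (0:ℝ), |v t n₀| ≤ C := by
      intro t ht
      have h1 : |v t n₀| ≤ ∑ m, |A m n₀ * res t m| := by
        rw [hvdef]; exact Finset.abs_sum_le_sum_abs _ _
      have h2 : ∑ m, |A m n₀ * res t m| ≤ ∑ m, |A m n₀| * R0 :=
        Finset.sum_le_sum fun m _ => by
          rw [abs_mul]
          exact mul_le_mul_of_nonneg_left (hres_bd t ht m) (abs_nonneg _)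
      rw [← Finset.sum_mul] at h2
      rw [hC]
      linarith
    set ρ : ℝ → ℝ := fun t => ∫ s in (0:ℝ)..t, (r (max s 0))^2 with hρdef
    have hρd : ∀ t ∈ Set.Ici (0:ℝ), HasDerivAt ρ (r t ^ 2) t := by
      intro t ht
      have hc : ∀ s ∈ Set.Ici (0:ℝ), ContinuousAt (fun w => (r w)^2) s :=
        fun s hs => ((hflow.1 s hs).continuousAt).pow 2
      have := aux_ftc (aux_trunc_cont hc) t
      simpa [max_eq_left (Set.mem_Ici.mp ht)] using this
    have hρ0 : ρ 0 = 0 := by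
      rw [hρdef]
      simp
    set δ : ℝ := 2 * (L:ℝ)^2 * ε with hδdef
    have hδ0 : 0 < δ := by
      rw [hδdef]
      have hL2pos : (0:ℝ) < (L:ℝ)^2 := by nlinarith [hLr]
      have := mul_pos (mul_pos (show (0:ℝ) < 2 from by norm_num) hL2pos) hε
      linarith
    have hD'le : ∀ t ∈ Set.Ici (0:ℝ),
        (L:ℝ) * r t ^ 2 * ∑ n, v t n * (z n - x t n ^ L) ≤ -(δ * r t ^ 2) := by
      intro t ht
      rw [hkey t, hressq t, hδdef]
      have h1 := hcon t ht
      have h2 : 0 ≤ (L:ℝ)^2 * r t ^ 2 * (loss A b L (x t) - ε) :=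
        mul_nonneg (mul_nonneg (sq_nonneg _) (sq_nonneg _)) (by linarith)
      nlinarith [h2]
    rcases eq_or_lt_of_le hL with hL2 | hL3
    · -- case L = 2
      subst hL2
      set mfun : ℝ → ℝ := fun t => Real.log (x t n₀ ^ 2) with hmfun
      set Dfun : ℝ → ℝ := fun t => ∑ n, ((z n * Real.log (z n) - z n)
        - (x t n ^ 2 * Real.log (x t n ^ 2) - x t n ^ 2)
        - Real.log (x t n ^ 2) * (z n - x t n ^ 2)) with hDfun
      have hmd : ∀ t ∈ Set.Ici (0:ℝ),
          HasDerivAt mfun (-(((2:ℕ):ℝ) * r t ^ 2 * v t n₀)) t := by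
        intro t ht
        have hxp := hxpos t ht n₀
        have hxn : x t n₀ ≠ 0 := ne_of_gt hxp
        have hxn2 : x t n₀ ^ 2 ≠ 0 := pow_ne_zero 2 hxn
        have hlog := ((hx' t ht n₀).fun_pow 2).log hxn2
        convert hlog using 1
        simp only [show (2:ℕ)-1 = 1 from by norm_num, pow_one]
        push_cast
        field_simp
      have hDd : ∀ t ∈ Set.Ici (0:ℝ), HasDerivAt Dfun
          (((2:ℕ):ℝ) * r t ^ 2 * ∑ n, v t n * (z n - x t n ^ 2)) t := by
        intro t ht
        have hsum : HasDerivAt Dfun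
            (∑ n, ((2:ℕ):ℝ) * r t ^ 2 * (v t n * (z n - x t n ^ 2))) t := by
          apply HasDerivAt.fun_sum
          intro n _
          have hxp := hxpos t ht n
          have hxn : x t n ≠ 0 := ne_of_gt hxp
          have hxn2 : x t n ^ 2 ≠ 0 := pow_ne_zero 2 hxn
          have h2 := (hx' t ht n).fun_pow 2
          have hlog := h2.log hxn2
          have hA := h2.fun_mul hlog
          have hB := hlog.fun_mul (h2.const_sub (z n))
          have hterm := ((hasDerivAt_const t (z n * Real.log (z n) - z n)).sub
            (hA.fun_sub h2)).fun_sub hB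
          convert hterm using 1
          rfl
          simp only [show (2:ℕ)-1 = 1 from by norm_num, pow_one]
          push_cast
          field_simp
          ring
        convert hsum using 1
        rw [Finset.mul_sum]
      have hDpos : ∀ t ∈ Set.Ici (0:ℝ), 0 ≤ Dfun t := by
        intro t ht
        refine Finset.sum_nonneg fun n _ => ?_
        have h := aux_breg2 (hz0 n) (show 0 < x t n ^ 2 from pow_pos (hxpos t ht n) 2)
        linarith
      have hm'le : ∀ t ∈ Set.Ici (0:ℝ),
          |-(((2:ℕ):ℝ) * r t ^ 2 * v t n₀)| ≤ (((2:ℕ):ℝ) * C) * r t ^ 2 := by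
        intro t ht
        have h1 := hvC t ht
        have h2 : |-(((2:ℕ):ℝ) * r t ^ 2 * v t n₀)|
            = ((2:ℕ):ℝ) * r t ^ 2 * |v t n₀| := by
          rw [abs_neg, abs_mul, abs_of_nonneg (by positivity : (0:ℝ) ≤ ((2:ℕ):ℝ) * r t ^ 2)]
        rw [h2]
        calc ((2:ℕ):ℝ) * r t ^ 2 * |v t n₀| ≤ ((2:ℕ):ℝ) * r t ^ 2 * C :=
              mul_le_mul_of_nonneg_left h1 (by positivity)
          _ = (((2:ℕ):ℝ) * C) * r t ^ 2 := by ring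
      set βm : ℝ := mfun 0 - (((2:ℕ):ℝ) * C) * (Dfun 0 / δ) with hβm
      have hbound : ∀ t ∈ Set.Ici (0:ℝ), βm ≤ mfun t → Real.exp βm ≤ r t ^ 2 := by
        intro t ht hmt
        have hxp := hxpos t ht n₀
        have h1 : Real.exp βm ≤ Real.exp (mfun t) := Real.exp_le_exp.mpr hmt
        have h2 : Real.exp (mfun t) = x t n₀ ^ 2 := Real.exp_log (pow_pos hxp 2)
        have h3 : x t n₀ ^ 2 ≤ r t ^ 2 := by
          rw [hr2sum t ht]
          exact Finset.single_le_sum (f := fun n => x t n ^ 2)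
            (fun i _ => sq_nonneg _) (Finset.mem_univ n₀)
        linarith
      exact aux_final hδ0 (Real.exp_pos βm) (by positivity)
        hρd hρ0 hDd hD'le hDpos hmd hm'le hbound
    · -- case 3 ≤ L
      obtain ⟨k, rfl⟩ : ∃ k, L = k + 3 := ⟨L - 3, by omega⟩
      simp only [show k + 3 - 1 = k + 2 from by omega] at hx'
      set lr : ℝ := ((k+3:ℕ):ℝ) with hlrdef
      have hlr3 : (3:ℝ) ≤ lr := by
        rw [hlrdef]; push_cast
        have : (0:ℝ) ≤ (k:ℝ) := Nat.cast_nonneg k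
        linarith
      set κ' : ℝ := lr^2/(2*(lr-2)) with hκdef
      set βc : ℝ := lr/(lr-2) with hβcdef
      have hβc0 : 0 < βc := by
        rw [hβcdef]
        apply div_pos <;> linarith
      set mfun : ℝ → ℝ := fun t => -βc * (x t n₀ ^ (k+1))⁻¹ with hmfun
      set Dfun : ℝ → ℝ := fun t => ∑ n, (-κ' * (z n) ^ ((2:ℝ)/lr) + κ' * x t n ^ 2
        + βc * (x t n ^ (k+1))⁻¹ * (z n - x t n ^ (k+3))) with hDfun
      have hmd : ∀ t ∈ Set.Ici (0:ℝ),
          HasDerivAt mfun (-(((k+3:ℕ):ℝ) * r t ^ 2 * v t n₀)) t := by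
        intro t ht
        have hxp := hxpos t ht n₀
        have hxn : x t n₀ ≠ 0 := ne_of_gt hxp
        have hpw : x t n₀ ^ (k+1) ≠ 0 := pow_ne_zero _ hxn
        have hinv := ((hx' t ht n₀).fun_pow (k+1)).fun_inv hpw
        have hfin := hinv.const_mul (-βc)
        convert hfin using 1
        rfl
        rfl
        simp only [show k+1-1 = k from by omega]
        rw [hβcdef, hlrdef]
        push_cast
        have hlr2 : ((k:ℝ) + 3) - 2 ≠ 0 := by
          have : (0:ℝ) ≤ (k:ℝ) := Nat.cast_nonneg k
          intro hcontra; linarith [hcontra]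
        field_simp
        ring
      have hDd : ∀ t ∈ Set.Ici (0:ℝ), HasDerivAt Dfun
          (((k+3:ℕ):ℝ) * r t ^ 2 * ∑ n, v t n * (z n - x t n ^ (k+3))) t := by
        intro t ht
        have hsum : HasDerivAt Dfun
            (∑ n, ((k+3:ℕ):ℝ) * r t ^ 2 * (v t n * (z n - x t n ^ (k+3)))) t := by
          apply HasDerivAt.fun_sum
          intro n _
          have hxp := hxpos t ht n
          have hxn : x t n ≠ 0 := ne_of_gt hxp
          have h2 := (hx' t ht n).fun_pow 2
          have hinv := ((hx' t ht n).fun_pow (k+1)).fun_inv (pow_ne_zero _ hxn)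
          have hprod := (hinv.const_mul βc).fun_mul (((hx' t ht n).fun_pow (k+3)).const_sub (z n))
          have hterm := ((hasDerivAt_const t (-κ' * (z n) ^ ((2:ℝ)/lr))).add
            (h2.const_mul κ')).fun_add hprod
          convert hterm using 1
          rfl
          simp only [show k+1-1 = k from by omega, show k+3-1 = k+2 from by omega,
            show (2:ℕ)-1 = 1 from by norm_num, pow_one]
          rw [hβcdef, hκdef, hlrdef]
          push_cast
          have hlr2 : ((k:ℝ) + 3) - 2 ≠ 0 := by
            have : (0:ℝ) ≤ (k:ℝ) := Nat.cast_nonneg k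
            intro hcontra; linarith [hcontra]
          field_simp
          ring
        convert hsum using 1
        rw [Finset.mul_sum]
      have hDpos : ∀ t ∈ Set.Ici (0:ℝ), 0 ≤ Dfun t := by
        intro t ht
        refine Finset.sum_nonneg fun n _ => ?_
        have h := aux_breg3 (show 3 ≤ k + 3 from by omega) (hz0 n) (hxpos t ht n)
        simp only [show k+3-2 = k+1 from by omega] at h
        rw [hκdef, hβcdef, hlrdef]
        convert h using 2 <;> norm_num
      have hm'le : ∀ t ∈ Set.Ici (0:ℝ),
          |-(((k+3:ℕ):ℝ) * r t ^ 2 * v t n₀)| ≤ (((k+3:ℕ):ℝ) * C) * r t ^ 2 := by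
        intro t ht
        have h1 := hvC t ht
        have h2 : |-(((k+3:ℕ):ℝ) * r t ^ 2 * v t n₀)|
            = ((k+3:ℕ):ℝ) * r t ^ 2 * |v t n₀| := by
          rw [abs_neg, abs_mul, abs_of_nonneg (by positivity : (0:ℝ) ≤ ((k+3:ℕ):ℝ) * r t ^ 2)]
        rw [h2]
        calc ((k+3:ℕ):ℝ) * r t ^ 2 * |v t n₀| ≤ ((k+3:ℕ):ℝ) * r t ^ 2 * C :=
              mul_le_mul_of_nonneg_left h1 (by positivity)
          _ = (((k+3:ℕ):ℝ) * C) * r t ^ 2 := by ring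
      set βm : ℝ := mfun 0 - (((k+3:ℕ):ℝ) * C) * (Dfun 0 / δ) with hβm
      set B₁ : ℝ := max (-βm) 1 with hB₁
      have hB₁0 : (0:ℝ) < B₁ := lt_of_lt_of_le one_pos (le_max_right _ _)
      set c0 : ℝ := (min 1 (βc / B₁))^2 with hc0
      have hmin0 : (0:ℝ) < min 1 (βc / B₁) := lt_min one_pos (div_pos hβc0 hB₁0)
      have hc00 : 0 < c0 := by rw [hc0]; positivity
      have hbound : ∀ t ∈ Set.Ici (0:ℝ), βm ≤ mfun t → c0 ≤ r t ^ 2 := by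
        intro t ht hmt
        have hxp := hxpos t ht n₀
        have hX : 0 < x t n₀ ^ (k+1) := pow_pos hxp _
        have hmf : mfun t = -(βc * (x t n₀ ^ (k+1))⁻¹) := by
          show -βc * (x t n₀ ^ (k+1))⁻¹ = _
          ring
        have h1 : βc * (x t n₀ ^ (k+1))⁻¹ ≤ B₁ := by
          have ha : -βm ≤ B₁ := by rw [hB₁]; exact le_max_left _ _
          rw [hmf] at hmt
          exact le_trans (le_neg.mp hmt) ha
        have h2 : βc / B₁ ≤ x t n₀ ^ (k+1) := by
          rw [div_le_iff₀ hB₁0]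
          have h3 := mul_le_mul_of_nonneg_right h1 (le_of_lt hX)
          have h4 : βc * (x t n₀ ^ (k+1))⁻¹ * (x t n₀ ^ (k+1)) = βc := by
            field_simp
          nlinarith [h3, h4]
        have hxge : min 1 (βc / B₁) ≤ x t n₀ := by
          rcases le_or_gt 1 (x t n₀) with h | h
          · exact le_trans (min_le_left _ _) h
          · refine le_trans (min_le_right _ _) (le_trans h2 ?_)
            calc x t n₀ ^ (k+1) ≤ x t n₀ ^ 1 :=
                  pow_le_pow_of_le_one (le_of_lt hxp) (le_of_lt h) (by omega)
              _ = x t n₀ := pow_one _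
        have h5 : c0 ≤ x t n₀ ^ 2 := by
          rw [hc0]
          exact pow_le_pow_left₀ (le_of_lt hmin0) hxge 2
        have h6 : x t n₀ ^ 2 ≤ r t ^ 2 := by
          rw [hr2sum t ht]
          exact Finset.single_le_sum (f := fun n => x t n ^ 2)
            (fun i _ => sq_nonneg _) (Finset.mem_univ n₀)
        linarith
      exact aux_final hδ0 hc00 (by positivity)
        hρd hρ0 hDd hD'le hDpos hmd hm'le hbound
  rw [Metric.tendsto_atTop]
  intro ε hε
  obtain ⟨T, hT, hTε⟩ := hmain ε hε
  refine ⟨T, fun t ht => ?_⟩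
  have ht0 : t ∈ Set.Ici (0:ℝ) := le_trans hT ht
  rw [Real.dist_eq, hxeq t ht0, sub_zero, abs_of_nonneg (hLnonneg t)]
  exact lt_of_le_of_lt (hLanti T hT t ht) hTε

end
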